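/- The function V(q̃, q̇) = (1/2)(q̇ - γ_p f(q̃))ᵀ M (q̇ - γ_p f(q̃)) + U_T(q̃) - (γ_p²/2) f(q̃)ᵀ M f(q̃) is positive definite and radially unbounded in (q̃, q̇) ∈ ℝ²×ℝ², where M is a symmetric positive definite matrix, U_T(q̃) ≥ b‖q̃‖² for ‖q̃‖ < 1 and U_T(q̃) ≥ b‖q̃‖ for ‖q̃‖ ≥ 1, f(q̃) = q̃/(1+‖q̃‖), provided 0 < γ_p < sqrt(2b/λ_M{M}) with λ_M{M} the largest eigenvalue of M. -/

import Mathlib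

open Matrix Filter

set_option maxHeartbeats 1000000 in
theorem lyapunov_posdef_radially_unbounded
    (M : Matrix (Fin 2) (Fin 2) ℝ) (hM : M.PosDef) (hMsymm : M.IsSymm)
    (lamM : ℝ) (hlam : ∀ x : Fin 2 → ℝ, x ⬝ᵥ (M *ᵥ x) ≤ lamM * (x ⬝ᵥ x))
    (b γp : ℝ) (hb : 0 < b) (hγ0 : 0 < γp) (hγ : γp < Real.sqrt (2 * b / lamM))
    (nrm : (Fin 2 → ℝ) → ℝ) (hnrm : ∀ v, nrm v = Real.sqrt (v ⬝ᵥ v))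
    (UT : (Fin 2 → ℝ) → ℝ) (hUTc : Continuous UT) (hUT0 : UT 0 = 0)
    (hUTlt : ∀ q, nrm q < 1 → b * nrm q ^ 2 ≤ UT q)
    (hUTge : ∀ q, 1 ≤ nrm q → b * nrm q ≤ UT q)
    (f : (Fin 2 → ℝ) → Fin 2 → ℝ) (hf : ∀ q, f q = (1 + nrm q)⁻¹ • q)
    (V : (Fin 2 → ℝ) → (Fin 2 → ℝ) → ℝ)
    (hV : ∀ qt qd, V qt qd =
      (1 / 2) * ((qd - γp • f qt) ⬝ᵥ (M *ᵥ (qd - γp • f qt))) + UT qt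
        - (γp ^ 2 / 2) * (f qt ⬝ᵥ (M *ᵥ f qt))) :
    (∀ qt qd : Fin 2 → ℝ, (qt, qd) ≠ (0, 0) → 0 < V qt qd) ∧
    V 0 0 = 0 ∧
    Filter.Tendsto (fun p : (Fin 2 → ℝ) × (Fin 2 → ℝ) => V p.1 p.2)
      (Filter.cocompact _) Filter.atTop := by
  -- basic dot product expansions
  have dot2 : ∀ x y : Fin 2 → ℝ, x ⬝ᵥ y = x 0 * y 0 + x 1 * y 1 := by
    intro x y; simp [dotProduct, Fin.sum_univ_two]
  have quad : ∀ x : Fin 2 → ℝ, x ⬝ᵥ (M *ᵥ x) =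
      M 0 0 * x 0 ^ 2 + (M 0 1 + M 1 0) * (x 0 * x 1) + M 1 1 * x 1 ^ 2 := by
    intro x; simp [dotProduct, mulVec, Fin.sum_univ_two]; ring
  have hpos : ∀ x : Fin 2 → ℝ, x ≠ 0 → 0 < x ⬝ᵥ (M *ᵥ x) := fun x hx => by
    simpa using hM.dotProduct_mulVec_pos hx
  have hPSD : ∀ x : Fin 2 → ℝ, 0 ≤ x ⬝ᵥ (M *ᵥ x) := by
    intro x
    by_cases hx : x = 0
    · subst hx; simp
    · exact (hpos x hx).le
  have hdself : ∀ v : Fin 2 → ℝ, 0 ≤ v ⬝ᵥ v := by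
    intro v; rw [dot2]; nlinarith [mul_self_nonneg (v 0), mul_self_nonneg (v 1)]
  have hnn : ∀ v, 0 ≤ nrm v := fun v => (hnrm v) ▸ Real.sqrt_nonneg _
  have hsq : ∀ v, nrm v ^ 2 = v ⬝ᵥ v := fun v => by
    rw [hnrm]; exact Real.sq_sqrt (hdself v)
  have hcoord : ∀ (v : Fin 2 → ℝ) (i : Fin 2), |v i| ≤ nrm v := by
    intro v i
    have hi : i = 0 ∨ i = 1 := by omega
    have h1 : v i ^ 2 ≤ v ⬝ᵥ v := by
      rw [dot2 v v]
      rcases hi with rfl | rfl <;>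
        nlinarith [mul_self_nonneg (v 0), mul_self_nonneg (v 1)]
    nlinarith [hsq v, hnn v, sq_abs (v i), abs_nonneg (v i)]
  -- positivity of nrm on nonzero vectors
  have hnpos : ∀ q : Fin 2 → ℝ, q ≠ 0 → 0 < nrm q := by
    intro q hq
    obtain ⟨i, hi⟩ := Function.ne_iff.mp hq
    have hi' : q i ≠ 0 := by simpa using hi
    have h2 : i = 0 ∨ i = 1 := by omega
    have hqq : 0 < q ⬝ᵥ q := by
      rw [dot2]
      rcases h2 with rfl | rfl <;>
        nlinarith [mul_self_nonneg (q 0), mul_self_nonneg (q 1), mul_self_pos.mpr hi']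
    rw [hnrm]; exact Real.sqrt_pos.mpr hqq
  -- matrix entries facts
  have e10 : M 0 1 = M 1 0 := hMsymm.apply 1 0
  have ha : 0 < M 0 0 := by
    have h := hpos ![1, 0] (by
      intro h; have := congrFun h 0; simp at this)
    rw [quad] at h; norm_num at h; linarith
  have hd : 0 < M 1 1 := by
    have h := hpos ![0, 1] (by
      intro h; have := congrFun h 1; simp at this)
    rw [quad] at h; norm_num at h; linarith
  have hdet : M 0 1 ^ 2 < M 0 0 * M 1 1 := by
    have h := hpos ![M 1 1, -(M 0 1)] (by
      intro h; have := congrFun h 0; simp at this; linarith)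
    rw [quad] at h; norm_num at h
    rw [← e10] at h
    nlinarith [hd, h]
  have had : 0 < M 0 0 + M 1 1 := by linarith
  -- a quantitative lower eigenvalue bound
  obtain ⟨c, hc0, hc'⟩ : ∃ c : ℝ, 0 < c ∧
      c * (M 0 0 + M 1 1) = M 0 0 * M 1 1 - M 0 1 ^ 2 :=
    ⟨(M 0 0 * M 1 1 - M 0 1 ^ 2) / (M 0 0 + M 1 1),
      div_pos (by nlinarith) had, div_mul_cancel₀ _ had.ne'⟩
  have hcM : ∀ x : Fin 2 → ℝ, c * (x ⬝ᵥ x) ≤ x ⬝ᵥ (M *ᵥ x) := by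
    intro x
    rw [dot2, quad, ← e10]
    have hcc : c * (M 0 0 + M 1 1) * (x 0 ^ 2 + x 1 ^ 2) =
        (M 0 0 * M 1 1 - M 0 1 ^ 2) * (x 0 ^ 2 + x 1 ^ 2) := by rw [hc']
    nlinarith [hcc, sq_nonneg (M 0 0 * x 0 + M 0 1 * x 1),
      sq_nonneg (M 0 1 * x 0 + M 1 1 * x 1), had, hc0,
      sq_nonneg (x 0), sq_nonneg (x 1)]
  -- lamM positivity and the key strict inequality
  have hlamM : 0 < lamM := by
    have h := hpos ![1, 0] (by
      intro h; have := congrFun h 0; simp at this)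
    have h2 := hlam ![1, 0]
    have h3 : (![1, 0] : Fin 2 → ℝ) ⬝ᵥ ![1, 0] = 1 := by
      rw [dot2]; norm_num
    rw [h3] at h2; nlinarith
  have hγ2 : γp ^ 2 * lamM < 2 * b := by
    have ht : (0:ℝ) ≤ 2 * b / lamM := by positivity
    have h1 : γp ^ 2 < 2 * b / lamM := by
      nlinarith [Real.sq_sqrt ht, Real.sqrt_nonneg (2 * b / lamM)]
    rw [lt_div_iff₀ hlamM] at h1; linarith
  -- dot products of f
  have hff : ∀ q : Fin 2 → ℝ, f q ⬝ᵥ f q = ((1 + nrm q)⁻¹) ^ 2 * (q ⬝ᵥ q) := by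
    intro q
    rw [hf q, dot2, dot2]
    simp only [Pi.smul_apply, smul_eq_mul]; ring
  have h1npos : ∀ q : Fin 2 → ℝ, 0 < 1 + nrm q := fun q => by linarith [hnn q]
  -- fMf ≤ lamM always
  have hfMf : ∀ q : Fin 2 → ℝ, f q ⬝ᵥ (M *ᵥ f q) ≤ lamM := by
    intro q
    have h1 := hlam (f q)
    rw [hff q, ← hsq q] at h1
    set n := nrm q with hn
    have hs : (1 + n)⁻¹ * (1 + n) = 1 := inv_mul_cancel₀ (h1npos q).ne'
    have hs0 : 0 ≤ (1 + n)⁻¹ := inv_nonneg.mpr (h1npos q).le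
    have hn0 : 0 ≤ n := hnn q
    have hsn : (1 + n)⁻¹ * n ≤ 1 := by nlinarith
    have hsn0 : 0 ≤ (1 + n)⁻¹ * n := by positivity
    have h3 : ((1 + n)⁻¹) ^ 2 * n ^ 2 ≤ 1 := by nlinarith
    nlinarith [hlamM]
  -- strict positivity of the potential part for nonzero q
  have hWpos : ∀ q : Fin 2 → ℝ, q ≠ 0 →
      (γp ^ 2 / 2) * (f q ⬝ᵥ (M *ᵥ f q)) < UT q := by
    intro q hq
    have hn0 : 0 < nrm q := hnpos q hq
    have h1 := hlam (f q)
    rw [hff q, ← hsq q] at h1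
    set n := nrm q with hn
    have hs : (1 + n)⁻¹ * (1 + n) = 1 := inv_mul_cancel₀ (h1npos q).ne'
    have hs0 : 0 ≤ (1 + n)⁻¹ := inv_nonneg.mpr (h1npos q).le
    have hs1 : (1 + n)⁻¹ ≤ 1 := by nlinarith
    rcases lt_or_ge n 1 with hlt | hge
    · have hUT := hUTlt q hlt
      have hs2 : ((1 + n)⁻¹) ^ 2 ≤ 1 := by nlinarith
      have h3 : ((1 + n)⁻¹) ^ 2 * n ^ 2 ≤ n ^ 2 := by nlinarith [hs2, sq_nonneg n]
      have h4 : f q ⬝ᵥ (M *ᵥ f q) ≤ lamM * n ^ 2 := by nlinarith [hlamM]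
      have h5 := mul_le_mul_of_nonneg_left h4 (by positivity : (0:ℝ) ≤ γp ^ 2 / 2)
      nlinarith [mul_pos hn0 hn0, hγ2]
    · have hUT := hUTge q hge
      have h4 := hfMf q
      have h5 := mul_le_mul_of_nonneg_left h4 (by positivity : (0:ℝ) ≤ γp ^ 2 / 2)
      have h6 : b * 1 ≤ b * n := mul_le_mul_of_nonneg_left hge hb.le
      nlinarith [hγ2]
  -- uniform lower bound on the potential part
  have hWlb : ∀ q : Fin 2 → ℝ,
      b * nrm q - (b + γp ^ 2 * lamM / 2) ≤
        UT q - (γp ^ 2 / 2) * (f q ⬝ᵥ (M *ᵥ f q)) := by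
    intro q
    have h4 := hfMf q
    have h5 := mul_le_mul_of_nonneg_left h4 (by positivity : (0:ℝ) ≤ γp ^ 2 / 2)
    have hn0 : 0 ≤ nrm q := hnn q
    rcases lt_or_ge (nrm q) 1 with hlt | hge
    · have hUT := hUTlt q hlt
      nlinarith [sq_nonneg (nrm q), hb]
    · have hUT := hUTge q hge
      nlinarith [hb]
  -- compute f 0 and nrm 0
  have hn00 : nrm 0 = 0 := by
    rw [hnrm]; simp
  have hf0 : f 0 = 0 := by rw [hf]; simp
  have hV00 : V 0 0 = 0 := by
    rw [hV, hf0, hUT0]; simp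
  refine ⟨?_, hV00, ?_⟩
  · -- positive definiteness
    intro qt qd hne
    rw [hV]
    by_cases hqt : qt = 0
    · subst hqt
      have hqd : qd ≠ 0 := fun h => hne (by rw [h])
      rw [hf0, hUT0]
      simp only [smul_zero, sub_zero, zero_dotProduct, mulVec_zero, dotProduct_zero,
        mul_zero, add_zero]
      have := hpos qd hqd
      linarith
    · have h1 : 0 ≤ (qd - γp • f qt) ⬝ᵥ (M *ᵥ (qd - γp • f qt)) := hPSD _
      have h2 := hWpos qt hqt
      linarith
  · -- radial unboundedness
    set C0 := b + γp ^ 2 * lamM / 2 with hC0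
    have hC0pos : 0 < C0 := by positivity
    have hVlb : ∀ qt qd : Fin 2 → ℝ,
        (c / 2) * ((qd - γp • f qt) ⬝ᵥ (qd - γp • f qt)) + b * nrm qt - C0 ≤
          V qt qd := by
      intro qt qd
      rw [hV]
      have h1 := hcM (qd - γp • f qt)
      have h2 := hWlb qt
      linarith
    rw [tendsto_atTop]
    intro C
    set D := max (C + C0) 0 + 1 with hD
    have hmax0 : (0:ℝ) ≤ max (C + C0) 0 := le_max_right _ _
    have hD0 : 0 < D := by linarith
    have hDC : C + C0 ≤ D := by linarith [le_max_left (C + C0) 0]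
    set R := max (D / b + 1) (γp + Real.sqrt (2 * D / c) + 1) with hR
    filter_upwards [tendsto_norm_cocompact_atTop.eventually_ge_atTop R] with p hp
    show C ≤ V p.1 p.2
    have hVlb' := hVlb p.1 p.2
    have hyy : 0 ≤ (p.2 - γp • f p.1) ⬝ᵥ (p.2 - γp • f p.1) := hdself _
    have hbn0 : 0 ≤ b * nrm p.1 := mul_nonneg hb.le (hnn _)
    rw [Prod.norm_def] at hp
    rcases le_max_iff.mp hp with h | h
    · -- first component is large
      have hn : R ≤ nrm p.1 := by
        have h0 : ‖p.1‖ ≤ nrm p.1 := by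
          rw [pi_norm_le_iff_of_nonneg (hnn _)]
          intro i; rw [Real.norm_eq_abs]; exact hcoord _ i
        linarith
      have hRb : D / b + 1 ≤ R := le_max_left _ _
      have hDn : D / b + 1 ≤ nrm p.1 := le_trans hRb hn
      have hbD : b * (D / b) = D := by field_simp
      have hbig : D + b ≤ b * nrm p.1 := by nlinarith [hb]
      have hc2 : 0 ≤ (c / 2) * ((p.2 - γp • f p.1) ⬝ᵥ (p.2 - γp • f p.1)) :=
        mul_nonneg (by positivity) hyy
      have s1 : C ≤ D + b - C0 := by linarith
      have s2 : D + b - C0 ≤ c / 2 * ((p.2 - γp • f p.1) ⬝ᵥ (p.2 - γp • f p.1)) + b * nrm p.1 - C0 := by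
        linarith [hc2, hbig]
      exact le_trans s1 (le_trans s2 hVlb')
    · -- second component is large
      have hR2 : γp + Real.sqrt (2 * D / c) + 1 ≤ R := le_max_right _ _
      have hsqrt0 : 0 ≤ Real.sqrt (2 * D / c) := Real.sqrt_nonneg _
      have hRpos : 0 < R := by linarith
      obtain ⟨i, hi⟩ : ∃ i, R ≤ |p.2 i| := by
        by_contra hcon
        push_neg at hcon
        have : ‖p.2‖ < R := by
          rw [pi_norm_lt_iff hRpos]
          intro i; rw [Real.norm_eq_abs]; exact hcon i
        linarith
      -- |f p.1 i| ≤ 1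
      have hfi : |f p.1 i| ≤ 1 := by
        rw [hf]
        simp only [Pi.smul_apply, smul_eq_mul, abs_mul]
        have h1n : (0:ℝ) < 1 + nrm p.1 := h1npos p.1
        have h1 : |(1 + nrm p.1)⁻¹| = (1 + nrm p.1)⁻¹ :=
          abs_of_nonneg (inv_nonneg.mpr h1n.le)
        rw [h1]
        have h2 : |p.1 i| ≤ nrm p.1 := hcoord _ i
        have hs := inv_mul_cancel₀ h1n.ne'
        nlinarith [inv_nonneg.mpr h1n.le, abs_nonneg (p.1 i)]
      -- the shifted vector and its coordinates
      have hyv : ∀ j, (p.2 - γp • f p.1) j = p.2 j - γp * f p.1 j := by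
        intro j; simp
      have hyi : Real.sqrt (2 * D / c) + 1 ≤ |(p.2 - γp • f p.1) i| := by
        rw [hyv]
        have habs : |p.2 i| - |γp * f p.1 i| ≤ |p.2 i - γp * f p.1 i| :=
          abs_sub_abs_le_abs_sub _ _
        have h3 : |γp * f p.1 i| = γp * |f p.1 i| := by
          rw [abs_mul, abs_of_pos hγ0]
        have h4 : γp * |f p.1 i| ≤ γp * 1 := mul_le_mul_of_nonneg_left hfi hγ0.le
        linarith
      have hsD : (0:ℝ) ≤ 2 * D / c := by positivity
      have hyi2 : 2 * D / c ≤ ((p.2 - γp • f p.1) i) ^ 2 := by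
        nlinarith [Real.sq_sqrt hsD, abs_nonneg ((p.2 - γp • f p.1) i),
          sq_abs ((p.2 - γp • f p.1) i)]
      have hyy2 : ((p.2 - γp • f p.1) i) ^ 2 ≤
          (p.2 - γp • f p.1) ⬝ᵥ (p.2 - γp • f p.1) := by
        rw [dot2, pow_two]
        have h2 : i = 0 ∨ i = 1 := by omega
        rcases h2 with rfl | rfl
        · linarith [mul_self_nonneg ((p.2 - γp • f p.1) 1)]
        · linarith [mul_self_nonneg ((p.2 - γp • f p.1) 0)]
      have hDyy : D ≤ (c / 2) * ((p.2 - γp • f p.1) ⬝ᵥ (p.2 - γp • f p.1)) := by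
        have h5 : 2 * D / c ≤ (p.2 - γp • f p.1) ⬝ᵥ (p.2 - γp • f p.1) :=
          le_trans hyi2 hyy2
        have hcD : c * (2 * D / c) = 2 * D := by field_simp
        nlinarith [hc0]
      have s1 : C ≤ D - C0 := by linarith
      have s2 : D - C0 ≤ c / 2 * ((p.2 - γp • f p.1) ⬝ᵥ (p.2 - γp • f p.1)) + b * nrm p.1 - C0 := by
        linarith [hDyy, hbn0]
      exact le_trans s1 (le_trans s2 hVlb')
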